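/- Let G be a group with a nilpotent normal subgroup N of finite index whose index is a π-number, and suppose G is a U_π-group. If N is π-local, then G is π-local. Consequently, in a virtually nilpotent U_π-group whose Fitting subgroup has finite π-index and is π-local, every element has q-th roots for all q ∉ π. -/
import Mathlib


/-- Let `G` be a `U_π`-group with a nilpotent normal subgroup `N` of finite index
which is a `π`-number, and suppose `N` is `π`-local. Then `G` is `π`-local: the
`q`-th power map is bijective on `G` for all primes `q ∉ π`. -/
theorem stmt14 {G : Type*} [Group G] (π : Set ℕ)
    (hU : ∀ q : ℕ, q.Prime → q ∉ π → Function.Injective (fun x : G => x ^ q))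
    (N : Subgroup G) [N.Normal] (hnil : Group.IsNilpotent N)
    (hidx : N.FiniteIndex) (hidxπ : ∀ p : ℕ, p.Prime → p ∣ N.index → p ∈ π)
    (hNloc : ∀ q : ℕ, q.Prime → q ∉ π → Function.Bijective (fun x : N => x ^ q)) :
    ∀ q : ℕ, q.Prime → q ∉ π → Function.Bijective (fun x : G => x ^ q) := by
  intro q hq hqπ
  refine ⟨hU q hq hqπ, ?_⟩
  intro g
  have hcop : Nat.Coprime q N.index :=
    (Nat.Prime.coprime_iff_not_dvd hq).2 fun hdvd => hqπ (hidxπ q hq hdvd)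
  have hbez : (1 : ℤ) = q * Nat.gcdA q N.index + N.index * Nat.gcdB q N.index := by
    have h := Nat.gcd_eq_gcd_ab q N.index
    rw [hcop] at h
    exact_mod_cast h
  set A := Nat.gcdA q N.index with hA
  set B := Nat.gcdB q N.index with hB
  have hmem : g ^ ((N.index : ℤ) * B) ∈ N := by
    rw [zpow_mul]
    exact N.zpow_mem (by simpa using N.pow_index_mem g) B
  obtain ⟨z, hz⟩ := (hNloc q hq hqπ).2 ⟨g ^ ((N.index : ℤ) * B), hmem⟩
  have hzG : (z : G) ^ q = g ^ ((N.index : ℤ) * B) := by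
    have := congrArg (Subtype.val) hz
    simpa using this
  -- z commutes with g
  have hconj : g⁻¹ * (z : G) * g ∈ N := by
    have := (inferInstance : N.Normal).conj_mem (z : G) z.2 g⁻¹
    simpa using this
  have hcomm : Commute g (z : G) := by
    have hcq : ((⟨g⁻¹ * (z : G) * g, hconj⟩ : N) : G) ^ q =
        ((z : G)) ^ q := by
      have : (g⁻¹ * (z : G) * g) ^ q = g⁻¹ * ((z : G)) ^ q * g := by
        have h2 := conj_pow (a := g⁻¹) (b := (z : G)) (i := q)
        simpa using h2
      rw [this, hzG]
      group
    have : (⟨g⁻¹ * (z : G) * g, hconj⟩ : N) = z := by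
      apply (hNloc q hq hqπ).1
      simp only
      ext
      push_cast
      exact hcq
    have h1 : g⁻¹ * (z : G) * g = (z : G) := congrArg Subtype.val this
    have : g * (g⁻¹ * (z : G) * g) * g⁻¹ = g * (z : G) * g⁻¹ := by rw [h1]
    unfold Commute SemiconjBy
    calc g * (z : G) = (g * (z : G) * g⁻¹) * g := by group
    _ = (g * (g⁻¹ * (z : G) * g) * g⁻¹) * g := by rw [h1]
    _ = (z : G) * g := by group
  refine ⟨g ^ A * (z : G), ?_⟩
  have hcomm2 : Commute (g ^ A) (z : G) := hcomm.zpow_left A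
  show (g ^ A * (z : G)) ^ q = g
  rw [hcomm2.mul_pow, hzG, ← zpow_natCast (g ^ A) q, ← zpow_mul, ← zpow_add,
    show A * q + (N.index : ℤ) * B = 1 by rw [hbez]; ring, zpow_one]
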